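/- Let n ≥ 3 and let d_2, …, d_{n−1} be nonnegative integers such that 0 < 1 + (b+1)β + Σ_{i=2}^{n−1} d_i β^i ≤ β^n. Then |1 + (b+1)α + Σ_{i=2}^{n−1} d_i α^i| ≥ |α|^n. -/

import Mathlib

open scoped BigOperators

/-- The recurrent integer sequence `T` with `T 0 = 1`, `T 1 = a`, `T 2 = a² + b`,
`T (n+3) = a T(n+2) + b T(n+1) + T n`. -/
def Tseq (a b : ℤ) : ℕ → ℤ
  | 0 => 1
  | 1 => a
  | 2 => a ^ 2 + b
  | n + 3 => a * Tseq a b (n + 2) + b * Tseq a b (n + 1) + Tseq a b n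

/-- The comparison word `(a-1)(a+b-1)(a+b)(a+b)⋯`. -/
def ruleWord (a b : ℤ) : ℕ → ℤ
  | 0 => a - 1
  | 1 => a + b - 1
  | _ + 2 => a + b

/-- The word `d j, d (j-1), …, d (j-k)` is lexicographically ≤ the word
`ruleWord 0, …, ruleWord k`. -/
def WordLe (a b : ℤ) (d : ℕ → ℕ) (j k : ℕ) : Prop :=
  (∀ i ≤ k, (d (j - i) : ℤ) = ruleWord a b i) ∨
    ∃ m ≤ k, (∀ i < m, (d (j - i) : ℤ) = ruleWord a b i) ∧ (d (j - m) : ℤ) < ruleWord a b m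

/-- Every finite factor `d j ⋯ d (j-k)` is lexicographically ≤ `(a-1)(a+b-1)(a+b)⋯(a+b)`. -/
def AdmissibleWord (a b : ℤ) (d : ℕ → ℕ) : Prop :=
  ∀ j k : ℕ, k ≤ j → WordLe a b d j k

/-- An admissible finitely supported digit sequence. -/
def IsAdmissible (a b : ℤ) (d : ℕ → ℕ) : Prop :=
  (Function.support d).Finite ∧ AdmissibleWord a b d

/-- The Rauzy norm `𝒩(x₁,x₂) = |(α + b/β)x₁ + x₂/β|`. -/
noncomputable def rnorm (b : ℤ) (β : ℝ) (α : ℂ) (x : Fin 2 → ℝ) : ℝ :=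
  ‖(α + (b : ℂ) / (β : ℂ)) * (x 0 : ℂ) + (x 1 : ℂ) / (β : ℂ)‖

/-- `𝒩₀(w) = inf {𝒩(w - p) : p ∈ ℤ²}`. -/
noncomputable def rnorm0 (b : ℤ) (β : ℝ) (α : ℂ) (w : Fin 2 → ℝ) : ℝ :=
  sInf {r | ∃ g : Fin 2 → ℤ, r = rnorm b β α (w - fun i => (g i : ℝ))}

/-- `δ(N) = N(1/β, 1/β²) − (Σ_{j≥1} d_j T_{j-1}, Σ_{j≥2} d_j T_{j-2})`. -/
noncomputable def deltaVec (a b : ℤ) (β : ℝ) (N : ℕ) (d : ℕ → ℕ) : Fin 2 → ℝ :=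
  ![(N : ℝ) / β - ∑ᶠ j : ℕ, (d (j + 1) : ℝ) * (Tseq a b j : ℝ),
    (N : ℝ) / β ^ 2 - ∑ᶠ j : ℕ, (d (j + 2) : ℝ) * (Tseq a b j : ℝ)]

/-- The matrix `B`. -/
noncomputable def Bmat (b : ℤ) (β : ℝ) : Matrix (Fin 2) (Fin 2) ℝ :=
  !![-b / β, -1 / β; 1 - b / β ^ 2, -1 / β ^ 2]

/-- The Rauzy fractal `𝓡 = {Σ_{i≥2} d_i α^i}` over admissible digit sequences,
where the digit sequence `(d_i)_{i≥2}` is encoded as `i ↦ d (i+2)`. -/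
def RauzyFractal (a b : ℤ) (α : ℂ) : Set ℂ :=
  {z | ∃ d : ℕ → ℕ, AdmissibleWord a b d ∧ z = ∑' i : ℕ, (d i : ℂ) * α ^ (i + 2)}

def redPow (a b : ℤ) : ℕ → ℤ × ℤ × ℤ
  | 0 => (1, 0, 0)
  | n + 1 => ((redPow a b n).2.2, (redPow a b n).1 + b * (redPow a b n).2.2,
      (redPow a b n).2.1 + a * (redPow a b n).2.2)

lemma redPow_spec {R : Type*} [CommRing R] (a b : ℤ) (x : R)
    (hx : x ^ 3 = (a : R) * x ^ 2 + (b : R) * x + 1) (i : ℕ) :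
    x ^ i = ((redPow a b i).1 : R) + ((redPow a b i).2.1 : R) * x
      + ((redPow a b i).2.2 : R) * x ^ 2 := by
  induction i with
  | zero => simp [redPow]
  | succ n ih =>
      rw [pow_succ, ih]
      simp only [redPow]
      push_cast
      linear_combination ((redPow a b n).2.2 : R) * hx

lemma cubic_prod_eq {R : Type*} [CommRing R] (a b A B C x y z : R)
    (h1 : y + z = a - x) (h2 : y * z = x ^ 2 - a * x - b)
    (h3 : x ^ 3 = a * x ^ 2 + b * x + 1) :
    (A + B * x + C * x ^ 2) * ((A + B * y + C * y ^ 2) * (A + B * z + C * z ^ 2)) =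
      A^3 + B^3 + C^3 - 3*A*B*C - b*B*C^2 - b*A*B^2 + 2*b*A^2*C + b^2*A*C^2
        + a*B^2*C - 2*a*A*C^2 + a*A^2*B - a*b*A*B*C + a^2*A^2*C := by
  linear_combination
    (A^2*B + a*A^2*C + z*A^2*C + z*b*A*C^2 + y*A^2*C + y*z*A*B*C + y*z^2*A*C^2 + x*A*B^2
      - x*A^2*C + x*a*A*B*C + x*z*A*B*C + x*z*b*B*C^2 + x*z*a*A*C^2 + x*y*A*B*C
      + x*y*z*B^2*C + x*y*z^2*B*C^2 + x^2*a*A*C^2 + x^2*z*b*C^3 + x^2*z*a*B*C^2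
      + x^2*y*A*C^2 + x^2*y*z*B*C^2 + x^2*y*z^2*C^3 - x^3*A*C^2 - x^3*z*B*C^2
      + x^3*z*a*C^3 - x^4*z*C^3) * h1 +
    (A*B^2 - 2*A^2*C - b*A*C^2 + a*A*B*C + z*a*A*C^2 - z^2*A*C^2 + x*B^3 - 3*x*A*B*C
      - x*b*B*C^2 + x*a*B^2*C - x*a*A*C^2 - x*z*A*C^2 + x*z*a*B*C^2 - x*z^2*B*C^2
      - x^2*A*C^2 - x^2*b*C^3 - x^2*z*B*C^2 + x^2*z*a*C^3 - x^2*z^2*C^3 - x^3*a*C^3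
      - x^3*z*C^3 + x^4*C^3) * h2 +
    (C^3 + B^3 - 3*A*B*C - b*B*C^2 + a*B^2*C - 2*a*A*C^2 - x*b*C^3 - x^2*a*C^3
      + x^3*C^3) * h3

lemma Seval {R : Type*} [CommRing R] (a b : ℤ) (n : ℕ) (d : ℕ → ℕ) (x : R)
    (hx : x ^ 3 = (a : R) * x ^ 2 + (b : R) * x + 1) :
    1 + ((b : R) + 1) * x + ∑ i ∈ Finset.Ico 2 n, (d i : R) * x ^ i
      = ((1 + ∑ i ∈ Finset.Ico 2 n, (d i : ℤ) * (redPow a b i).1 : ℤ) : R)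
        + (((b + 1) + ∑ i ∈ Finset.Ico 2 n, (d i : ℤ) * (redPow a b i).2.1 : ℤ) : R) * x
        + ((∑ i ∈ Finset.Ico 2 n, (d i : ℤ) * (redPow a b i).2.2 : ℤ) : R) * x ^ 2 := by
  have h : ∀ i ∈ Finset.Ico 2 n, (d i : R) * x ^ i
      = ((d i : ℤ) * (redPow a b i).1 : ℤ) + (((d i : ℤ) * (redPow a b i).2.1 : ℤ) : R) * x
        + (((d i : ℤ) * (redPow a b i).2.2 : ℤ) : R) * x ^ 2 := by
    intro i _
    rw [redPow_spec a b x hx i]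
    push_cast
    ring
  rw [Finset.sum_congr rfl h, Finset.sum_add_distrib, Finset.sum_add_distrib,
    ← Finset.sum_mul, ← Finset.sum_mul]
  push_cast
  ring

/-- If `0 < 1 + (b+1)β + Σ_{i=2}^{n−1} d_i β^i ≤ β^n` then
`|1 + (b+1)α + Σ_{i=2}^{n−1} d_i α^i| ≥ |α|^n`. -/
theorem abs_one_add_sum_alpha_ge (a b : ℤ) (hab : -a + 1 ≤ b) (hb : b ≤ -2)
    (β : ℝ) (hβ : 1 < β) (hβroot : β ^ 3 = a * β ^ 2 + b * β + 1)
    (α : ℂ) (hαim : α.im ≠ 0) (hαroot : α ^ 3 = a * α ^ 2 + b * α + 1)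
    (hαabs : ‖α‖ < 1)
    (n : ℕ) (hn : 3 ≤ n) (d : ℕ → ℕ)
    (hpos : 0 < 1 + ((b : ℝ) + 1) * β + ∑ i ∈ Finset.Ico 2 n, (d i : ℝ) * β ^ i)
    (hle : 1 + ((b : ℝ) + 1) * β + ∑ i ∈ Finset.Ico 2 n, (d i : ℝ) * β ^ i ≤ β ^ n) :
    ‖α‖ ^ n ≤
      ‖1 + ((b : ℂ) + 1) * α + ∑ i ∈ Finset.Ico 2 n, (d i : ℂ) * α ^ i‖ := by
  have hβ0 : (0:ℝ) < β := lt_trans one_pos hβ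
  set γ : ℂ := (starRingEnd ℂ) α with hγdef
  set x : ℂ := (β : ℂ) with hxdef
  have hxroot : x ^ 3 = (a:ℂ) * x ^ 2 + (b:ℂ) * x + 1 := by
    rw [hxdef]; exact_mod_cast hβroot
  have hγroot : γ ^ 3 = (a:ℂ) * γ ^ 2 + (b:ℂ) * γ + 1 := by
    have := congrArg (starRingEnd ℂ) hαroot
    simpa using this
  have hγim : γ.im = -α.im := Complex.conj_im α
  have hxim : x.im = 0 := Complex.ofReal_im β
  have hαγ : α ≠ γ := by
    intro h
    apply hαim
    have : α.im = -α.im := by rw [← hγim, ← h]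
    linarith
  have hxα : x ≠ α := by
    intro h; exact hαim (by rw [← h, hxim])
  have hxγ : x ≠ γ := by
    intro h
    apply hαim
    have : (0:ℝ) = -α.im := by rw [← hγim, ← h, hxim]
    linarith
  -- pairwise relation
  have pair : ∀ u v : ℂ, u ^ 3 = (a:ℂ) * u ^ 2 + (b:ℂ) * u + 1 →
      v ^ 3 = (a:ℂ) * v ^ 2 + (b:ℂ) * v + 1 → u ≠ v →
      u ^ 2 + u * v + v ^ 2 = (a:ℂ) * (u + v) + b := by
    intro u v hu hv huv
    have h : (u - v) * (u ^ 2 + u * v + v ^ 2 - ((a:ℂ) * (u + v) + b)) = 0 := by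
      linear_combination hu - hv
    rcases mul_eq_zero.mp h with h' | h'
    · exact absurd (sub_eq_zero.mp h') huv
    · exact sub_eq_zero.mp h'
  have pxα := pair x α hxroot hαroot hxα
  have pxγ := pair x γ hxroot hγroot hxγ
  have pαγ := pair α γ hαroot hγroot hαγ
  have h1 : α + γ = (a:ℂ) - x := by
    have h : (α - γ) * (α + γ + x - a) = 0 := by linear_combination pxα - pxγ
    rcases mul_eq_zero.mp h with h' | h'
    · exact absurd (sub_eq_zero.mp h') hαγ
    · linear_combination h'
  have h2 : α * γ = x ^ 2 - (a:ℂ) * x - b := by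
    linear_combination (α + γ - x) * h1 - pαγ
  have h3 : x * (α * γ) = 1 := by
    rw [h2]; linear_combination hxroot
  -- |α|² = 1/β
  have hnsα : β * Complex.normSq α = 1 := by
    have h : (β:ℂ) * ((Complex.normSq α : ℝ) : ℂ) = 1 := by
      rw [← Complex.mul_conj]; exact h3
    exact_mod_cast h
  -- the integer coefficients
  set A : ℤ := 1 + ∑ i ∈ Finset.Ico 2 n, (d i : ℤ) * (redPow a b i).1 with hAdef
  set B : ℤ := (b + 1) + ∑ i ∈ Finset.Ico 2 n, (d i : ℤ) * (redPow a b i).2.1 with hBdef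
  set C : ℤ := ∑ i ∈ Finset.Ico 2 n, (d i : ℤ) * (redPow a b i).2.2 with hCdef
  have hβR : β ^ 3 = (a:ℝ) * β ^ 2 + (b:ℝ) * β + 1 := by exact_mod_cast hβroot
  have SβR : 1 + ((b : ℝ) + 1) * β + ∑ i ∈ Finset.Ico 2 n, (d i : ℝ) * β ^ i
      = (A:ℝ) + (B:ℝ) * β + (C:ℝ) * β ^ 2 := Seval a b n d β hβR
  have SαC : 1 + ((b : ℂ) + 1) * α + ∑ i ∈ Finset.Ico 2 n, (d i : ℂ) * α ^ i
      = (A:ℂ) + (B:ℂ) * α + (C:ℂ) * α ^ 2 := Seval a b n d α hαroot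
  set Sα : ℂ := 1 + ((b : ℂ) + 1) * α + ∑ i ∈ Finset.Ico 2 n, (d i : ℂ) * α ^ i with hSαdef
  have SγC : (starRingEnd ℂ) ((A:ℂ) + (B:ℂ) * α + (C:ℂ) * α ^ 2)
      = (A:ℂ) + (B:ℂ) * γ + (C:ℂ) * γ ^ 2 := by
    simp [hγdef]
  set F : ℤ := A^3 + B^3 + C^3 - 3*A*B*C - b*B*C^2 - b*A*B^2 + 2*b*A^2*C + b^2*A*C^2
      + a*B^2*C - 2*a*A*C^2 + a*A^2*B - a*b*A*B*C + a^2*A^2*C with hFdef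
  have key : ((A:ℂ) + (B:ℂ) * x + (C:ℂ) * x ^ 2) *
      (((A:ℂ) + (B:ℂ) * α + (C:ℂ) * α ^ 2) * ((A:ℂ) + (B:ℂ) * γ + (C:ℂ) * γ ^ 2)) = (F:ℂ) := by
    rw [hFdef]
    push_cast
    exact cubic_prod_eq (a:ℂ) (b:ℂ) (A:ℂ) (B:ℂ) (C:ℂ) x α γ h1 h2 hxroot
  have keyR : ((A:ℝ) + (B:ℝ) * β + (C:ℝ) * β ^ 2) * Complex.normSq Sα = (F:ℝ) := by
    have hc : (((A:ℝ) + (B:ℝ) * β + (C:ℝ) * β ^ 2 : ℝ) : ℂ) *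
        ((Complex.normSq Sα : ℝ) : ℂ) = ((F:ℝ) : ℂ) := by
      rw [← Complex.mul_conj, SαC, SγC]
      push_cast
      rw [← hxdef]
      linear_combination key
    exact_mod_cast hc
  -- Sα ≠ 0
  have hSα_ne : Sα ≠ 0 := by
    intro h0
    have hq : (A:ℂ) + (B:ℂ) * α + (C:ℂ) * α ^ 2 = 0 := by rw [← SαC]; exact h0
    have hqγ : (A:ℂ) + (B:ℂ) * γ + (C:ℂ) * γ ^ 2 = 0 := by
      rw [← SγC, ← SαC, h0, map_zero]
    by_cases hC : C = 0
    · have hq' : (A:ℂ) + (B:ℂ) * α = 0 := by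
        rw [hC] at hq; push_cast at hq; linear_combination hq
      have him : (B:ℝ) * α.im = 0 := by
        have h := congrArg Complex.im hq'
        simpa [Complex.add_im, Complex.mul_im] using h
      have hB' : B = 0 := by
        rcases mul_eq_zero.mp him with h | h
        · exact_mod_cast h
        · exact absurd h hαim
      have hA' : A = 0 := by
        rw [hB'] at hq'
        have hA0 : (A:ℂ) = 0 := by push_cast at hq' ⊢; linear_combination hq'
        exact_mod_cast hA0
      rw [SβR, hA', hB', hC] at hpos
      push_cast at hpos
      linarith
    · have hs : (B:ℂ) + (C:ℂ) * (α + γ) = 0 := by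
        have h : (α - γ) * ((B:ℂ) + (C:ℂ) * (α + γ)) = 0 := by
          linear_combination hq - hqγ
        rcases mul_eq_zero.mp h with h' | h'
        · exact absurd (sub_eq_zero.mp h') hαγ
        · exact h'
      have hCm : (C:ℂ) * (α * γ) = (A:ℂ) := by linear_combination α * hs - hq
      have hBA : x * (A:ℂ) = (C:ℂ) := by linear_combination (C:ℂ) * h3 - x * hCm
      rw [hxdef] at hBA
      have hAR : β * (A:ℝ) = (C:ℝ) := by exact_mod_cast hBA
      have hA0 : A ≠ 0 := by
        intro h
        rw [h] at hAR
        apply hC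
        have : (C:ℝ) = 0 := by push_cast at hAR ⊢; linarith
        exact_mod_cast this
      have hcubeR : (C:ℝ)^3 = (a:ℝ)*A*C^2 + (b:ℝ)*A^2*C + A^3 := by
        linear_combination ((A:ℝ)^3) * hβR +
          (-((C:ℝ)^2 + (C:ℝ)*(A:ℝ)*β + (A:ℝ)^2*β^2) + (a:ℝ)*(A:ℝ)*((C:ℝ)+(A:ℝ)*β)
            + (b:ℝ)*(A:ℝ)^2) * hAR
      have hcube : C^3 = a*A*C^2 + b*A^2*C + A^3 := by exact_mod_cast hcubeR
      set g : ℤ := (Int.gcd A C : ℤ) with hgdef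
      have hgpos : 0 < Int.gcd A C := Int.gcd_pos_iff.mpr (Or.inl hA0)
      have hg0 : g ≠ 0 := by
        rw [hgdef]
        exact_mod_cast hgpos.ne'
      have hdA : g ∣ A := Int.gcd_dvd_left A C
      have hdC : g ∣ C := Int.gcd_dvd_right A C
      have hA1 : A = g * (A / g) := (Int.mul_ediv_cancel' hdA).symm
      have hC1 : C = g * (C / g) := (Int.mul_ediv_cancel' hdC).symm
      have hco : IsCoprime (A / g) (C / g) := by
        rw [Int.isCoprime_iff_gcd_eq_one]
        exact Int.gcd_div_gcd_div_gcd hgpos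
      set A1 : ℤ := A / g
      set C1 : ℤ := C / g
      have hcube1 : C1^3 = a*A1*C1^2 + b*A1^2*C1 + A1^3 := by
        have h := hcube
        rw [hA1, hC1] at h
        have h' : g^3 * (C1^3) = g^3 * (a*A1*C1^2 + b*A1^2*C1 + A1^3) := by
          linear_combination h
        exact mul_left_cancel₀ (pow_ne_zero 3 hg0) h'
      have hdvd1 : A1 ∣ C1^3 := ⟨a*C1^2 + b*A1*C1 + A1^2, by linear_combination hcube1⟩
      have hu1 : IsUnit A1 := (hco.pow_right).isUnit_of_dvd' dvd_rfl hdvd1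
      have hdvd2 : C1 ∣ A1^3 := ⟨C1^2 - a*A1*C1 - b*A1^2, by linear_combination -hcube1⟩
      have hu2 : IsUnit C1 := (hco.symm.pow_right).isUnit_of_dvd' dvd_rfl hdvd2
      have hCA : C = A ∨ C = -A := by
        rcases Int.isUnit_iff.mp hu1 with h1' | h1' <;>
          rcases Int.isUnit_iff.mp hu2 with h2' | h2'
        · left; rw [hA1, hC1, h1', h2']
        · right; rw [hA1, hC1, h1', h2']; ring
        · right; rw [hA1, hC1, h1', h2']; ring
        · left; rw [hA1, hC1, h1', h2']
      have hAne : (A:ℝ) ≠ 0 := Int.cast_ne_zero.mpr hA0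
      rcases hCA with h | h
      · rw [h] at hAR
        have : β = 1 := by
          have h2 : (β - 1) * (A:ℝ) = 0 := by linarith
          rcases mul_eq_zero.mp h2 with h3' | h3'
          · linarith
          · exact absurd h3' hAne
        linarith
      · rw [h] at hAR
        push_cast at hAR
        have h2 : (β + 1) * (A:ℝ) = 0 := by linarith
        rcases mul_eq_zero.mp h2 with h3' | h3'
        · linarith
        · exact absurd h3' hAne
  -- final assembly
  have hns_pos : 0 < Complex.normSq Sα := Complex.normSq_pos.mpr hSα_ne
  have hSβpos : 0 < (A:ℝ) + (B:ℝ)*β + (C:ℝ)*β^2 := by rw [← SβR]; exact hpos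
  have hSβle : (A:ℝ) + (B:ℝ)*β + (C:ℝ)*β^2 ≤ β^n := by rw [← SβR]; exact hle
  have hβn : (0:ℝ) < β^n := pow_pos hβ0 n
  have hF1 : (1:ℝ) ≤ (F:ℝ) := by
    have h01 : (0:ℝ) < (F:ℝ) := by rw [← keyR]; exact mul_pos hSβpos hns_pos
    have h02 : (0:ℤ) < F := by exact_mod_cast h01
    exact_mod_cast h02
  have hns_ge : 1/β^n ≤ Complex.normSq Sα := by
    rw [div_le_iff₀ hβn]
    nlinarith [mul_le_mul_of_nonneg_right hSβle (le_of_lt hns_pos)]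
  have habs2 : (‖α‖ ^ n)^2 ≤ (‖Sα‖)^2 := by
    rw [Complex.sq_norm]
    have e1 : (‖α‖ ^ n)^2 = (Complex.normSq α)^n := by
      rw [← Complex.sq_norm]; ring
    rw [e1]
    have e2 : Complex.normSq α = 1/β := by
      field_simp
      linarith [hnsα]
    rw [e2, div_pow, one_pow]
    exact hns_ge
  nlinarith [norm_nonneg Sα, pow_nonneg (norm_nonneg α) n, habs2]
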